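/- Let q be odd and n ≥ 3, and let Q₁, Q₂ be nondegenerate quadratic forms on F_q^n (given by symmetric invertible matrices M₁, M₂ via Q_i(x) = x M_i x^T) with the same zero set: {x : Q₁(x) = 0} = {x : Q₂(x) = 0}. Then there exists λ ∈ F_q* with M₂ = λ M₁. -/

import Mathlib

open Matrix

section QFAux
open MvPolynomial


variable {F : Type*} [Field F] {n : ℕ}

lemma bsymm (M : Matrix (Fin n) (Fin n) F) (hMs : Mᵀ = M) (x y : Fin n → F) :
    x ⬝ᵥ (M *ᵥ y) = y ⬝ᵥ (M *ᵥ x) := by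
  rw [dotProduct_mulVec, ← vecMul_transpose, hMs, dotProduct_comm]

lemma nondeg (M : Matrix (Fin n) (Fin n) F) (hM : IsUnit M.det) (v : Fin n → F)
    (h : ∀ u, v ⬝ᵥ (M *ᵥ u) = 0) : v = 0 := by
  have hvM : v ᵥ* M = 0 := by
    funext i
    have := h (Pi.single i 1)
    rwa [dotProduct_mulVec, dotProduct_single, mul_one] at this
  have : v ᵥ* M ᵥ* M⁻¹ = 0 := by rw [hvM]; simp
  rwa [vecMul_vecMul, Matrix.mul_nonsing_inv _ hM, vecMul_one] at this

lemma nondeg' (M : Matrix (Fin n) (Fin n) F) (hM : IsUnit M.det) {v : Fin n → F}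
    (hv : v ≠ 0) : ∃ u, v ⬝ᵥ (M *ᵥ u) ≠ 0 := by
  by_contra h
  push_neg at h
  exact hv (nondeg M hM v h)

lemma lin3 (M : Matrix (Fin n) (Fin n) F) (a b c : F) (x y w u : Fin n → F) :
    (a • x + b • y + c • w) ⬝ᵥ (M *ᵥ u)
      = a * (x ⬝ᵥ (M *ᵥ u)) + b * (y ⬝ᵥ (M *ᵥ u)) + c * (w ⬝ᵥ (M *ᵥ u)) := by
  simp [add_dotProduct, smul_dotProduct, smul_eq_mul]

lemma lin3r (M : Matrix (Fin n) (Fin n) F) (a b c : F) (x y w u : Fin n → F) :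
    u ⬝ᵥ (M *ᵥ (a • x + b • y + c • w))
      = a * (u ⬝ᵥ (M *ᵥ x)) + b * (u ⬝ᵥ (M *ᵥ y)) + c * (u ⬝ᵥ (M *ᵥ w)) := by
  simp [mulVec_add, mulVec_smul, dotProduct_add, dotProduct_smul, smul_eq_mul]

lemma lin3o (M : Matrix (Fin n) (Fin n) F) (b c : F) (x y w u : Fin n → F) :
    (x + b • y + c • w) ⬝ᵥ (M *ᵥ u)
      = x ⬝ᵥ (M *ᵥ u) + b * (y ⬝ᵥ (M *ᵥ u)) + c * (w ⬝ᵥ (M *ᵥ u)) := by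
  simp [add_dotProduct, smul_dotProduct, smul_eq_mul]

lemma lin3or (M : Matrix (Fin n) (Fin n) F) (b c : F) (x y w u : Fin n → F) :
    u ⬝ᵥ (M *ᵥ (x + b • y + c • w))
      = u ⬝ᵥ (M *ᵥ x) + b * (u ⬝ᵥ (M *ᵥ y)) + c * (u ⬝ᵥ (M *ᵥ w)) := by
  simp [mulVec_add, mulVec_smul, dotProduct_add, dotProduct_smul, smul_eq_mul]

lemma lin2o (M : Matrix (Fin n) (Fin n) F) (b : F) (x y u : Fin n → F) :
    (x + b • y) ⬝ᵥ (M *ᵥ u) = x ⬝ᵥ (M *ᵥ u) + b * (y ⬝ᵥ (M *ᵥ u)) := by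
  simp [add_dotProduct, smul_dotProduct, smul_eq_mul]

lemma lin2or (M : Matrix (Fin n) (Fin n) F) (b : F) (x y u : Fin n → F) :
    u ⬝ᵥ (M *ᵥ (x + b • y)) = u ⬝ᵥ (M *ᵥ x) + b * (u ⬝ᵥ (M *ᵥ y)) := by
  simp [mulVec_add, mulVec_smul, dotProduct_add, dotProduct_smul, smul_eq_mul]

lemma qexp3o (M : Matrix (Fin n) (Fin n) F) (hMs : Mᵀ = M) (b c : F) (x y w : Fin n → F) :
    (x + b • y + c • w) ⬝ᵥ (M *ᵥ (x + b • y + c • w))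
      = x ⬝ᵥ (M *ᵥ x) + b * b * (y ⬝ᵥ (M *ᵥ y)) + c * c * (w ⬝ᵥ (M *ᵥ w))
        + 2 * b * (x ⬝ᵥ (M *ᵥ y)) + 2 * c * (x ⬝ᵥ (M *ᵥ w))
        + 2 * (b * c) * (y ⬝ᵥ (M *ᵥ w)) := by
  rw [lin3o, lin3or, lin3or, lin3or]
  rw [bsymm M hMs y x, bsymm M hMs w x, bsymm M hMs w y]
  ring

lemma qexp2o (M : Matrix (Fin n) (Fin n) F) (hMs : Mᵀ = M) (b : F) (x y : Fin n → F) :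
    (x + b • y) ⬝ᵥ (M *ᵥ (x + b • y))
      = x ⬝ᵥ (M *ᵥ x) + 2 * b * (x ⬝ᵥ (M *ᵥ y)) + b * b * (y ⬝ᵥ (M *ᵥ y)) := by
  rw [lin2o, lin2or, lin2or, bsymm M hMs y x]
  ring

/-- Proportionality of the two bilinear functionals at a nonzero isotropic point. -/
lemma ratio_exists (M₁ M₂ : Matrix (Fin n) (Fin n) F)
    (hM₁s : M₁ᵀ = M₁) (hM₂s : M₂ᵀ = M₂) (hM₁ : IsUnit M₁.det) (hM₂ : IsUnit M₂.det)
    (h2 : (2 : F) ≠ 0)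
    (hz : ∀ v, v ⬝ᵥ (M₁ *ᵥ v) = 0 ↔ v ⬝ᵥ (M₂ *ᵥ v) = 0)
    {x : Fin n → F} (hx0 : x ≠ 0) (hx : x ⬝ᵥ (M₁ *ᵥ x) = 0) :
    ∃ c, c ≠ 0 ∧ ∀ u, x ⬝ᵥ (M₂ *ᵥ u) = c * (x ⬝ᵥ (M₁ *ᵥ u)) := by
  have hx2 : x ⬝ᵥ (M₂ *ᵥ x) = 0 := (hz x).1 hx
  have key : ∀ y, x ⬝ᵥ (M₁ *ᵥ y) = 0 → x ⬝ᵥ (M₂ *ᵥ y) = 0 := by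
    intro y h1
    by_cases hQy : y ⬝ᵥ (M₁ *ᵥ y) = 0
    · have hQ2y : y ⬝ᵥ (M₂ *ᵥ y) = 0 := (hz y).1 hQy
      have hiso : (x + (1:F) • y) ⬝ᵥ (M₁ *ᵥ (x + (1:F) • y)) = 0 := by
        rw [qexp2o M₁ hM₁s, hx, hQy, h1]; ring
      have hiso2 := (hz _).1 hiso
      rw [qexp2o M₂ hM₂s, hx2, hQ2y] at hiso2
      have : (2:F) * (x ⬝ᵥ (M₂ *ᵥ y)) = 0 := by linear_combination hiso2
      exact (mul_eq_zero.mp this).resolve_left h2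
    · by_contra hB2
      have hQ2y : y ⬝ᵥ (M₂ *ᵥ y) ≠ 0 := fun h => hQy ((hz y).2 h)
      set t : F := -(2 * (x ⬝ᵥ (M₂ *ᵥ y))) * (y ⬝ᵥ (M₂ *ᵥ y))⁻¹ with ht
      have ht0 : t ≠ 0 :=
        mul_ne_zero (neg_ne_zero.mpr (mul_ne_zero h2 hB2)) (inv_ne_zero hQ2y)
      have hiso2 : (x + t • y) ⬝ᵥ (M₂ *ᵥ (x + t • y)) = 0 := by
        rw [qexp2o M₂ hM₂s, hx2, ht]
        field_simp
        ring
      have hiso1 := (hz _).2 hiso2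
      rw [qexp2o M₁ hM₁s, hx, h1] at hiso1
      have : t * t * (y ⬝ᵥ (M₁ *ᵥ y)) ≠ 0 := mul_ne_zero (mul_ne_zero ht0 ht0) hQy
      apply this
      linear_combination hiso1
  obtain ⟨u₀, hu₀⟩ := nondeg' M₁ hM₁ hx0
  set c : F := (x ⬝ᵥ (M₂ *ᵥ u₀)) * (x ⬝ᵥ (M₁ *ᵥ u₀))⁻¹ with hc
  have hmain : ∀ u, x ⬝ᵥ (M₂ *ᵥ u) = c * (x ⬝ᵥ (M₁ *ᵥ u)) := by
    intro u
    set d : F := (x ⬝ᵥ (M₁ *ᵥ u)) * (x ⬝ᵥ (M₁ *ᵥ u₀))⁻¹ with hd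
    have h1 : x ⬝ᵥ (M₁ *ᵥ (u - d • u₀)) = 0 := by
      rw [mulVec_sub, dotProduct_sub, mulVec_smul, dotProduct_smul, smul_eq_mul, hd]
      field_simp
      ring
    have h2' := key _ h1
    rw [mulVec_sub, dotProduct_sub, mulVec_smul, dotProduct_smul, smul_eq_mul, sub_eq_zero] at h2'
    rw [h2', hd, hc]
    field_simp
  refine ⟨c, ?_, hmain⟩
  intro hc0
  apply hx0
  apply nondeg M₂ hM₂ x
  intro u
  rw [hmain u, hc0, zero_mul]

/-- Existence of an anisotropic vector orthogonal to two given isotropic vectors. -/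
lemma wexists (M₁ : Matrix (Fin n) (Fin n) F)
    (hM₁s : M₁ᵀ = M₁) (hM₁ : IsUnit M₁.det) (h2 : (2 : F) ≠ 0) (hn : 3 ≤ n)
    {x y : Fin n → F} (hx : x ⬝ᵥ (M₁ *ᵥ x) = 0) (hy : y ⬝ᵥ (M₁ *ᵥ y) = 0)
    (hxy : x ⬝ᵥ (M₁ *ᵥ y) ≠ 0) :
    ∃ w, x ⬝ᵥ (M₁ *ᵥ w) = 0 ∧ y ⬝ᵥ (M₁ *ᵥ w) = 0 ∧ w ⬝ᵥ (M₁ *ᵥ w) ≠ 0 := by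
  by_contra hcon
  push_neg at hcon
  -- the joint orthogonal complement has a nonzero vector
  have hker : ∃ w₀, w₀ ≠ 0 ∧ x ⬝ᵥ (M₁ *ᵥ w₀) = 0 ∧ y ⬝ᵥ (M₁ *ᵥ w₀) = 0 := by
    by_contra hk
    push_neg at hk
    let φ : (Fin n → F) →ₗ[F] F × F :=
      { toFun := fun v => (x ⬝ᵥ (M₁ *ᵥ v), y ⬝ᵥ (M₁ *ᵥ v))
        map_add' := by intro a b; simp [mulVec_add, dotProduct_add]
        map_smul' := by intro m a; simp [mulVec_smul, dotProduct_smul] }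
    have hinj : Function.Injective φ := by
      intro a b hab
      have h0 : φ (a - b) = 0 := by
        simp only [map_sub, hab, sub_self]
      by_contra hne
      have := hk (a - b) (sub_ne_zero.mpr hne)
      have h1 : x ⬝ᵥ (M₁ *ᵥ (a - b)) = 0 := congrArg Prod.fst h0
      have h2' : y ⬝ᵥ (M₁ *ᵥ (a - b)) = 0 := congrArg Prod.snd h0
      exact this h1 h2'
    have hle := LinearMap.finrank_le_finrank_of_injective hinj
    rw [Module.finrank_pi] at hle
    simp only [Fintype.card_fin] at hle
    have : Module.finrank F (F × F) = 2 := by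
      simp [Module.finrank_prod]
    omega
  obtain ⟨w₀, hw₀0, hw₀x, hw₀y⟩ := hker
  apply hw₀0
  apply nondeg M₁ hM₁ w₀
  intro v
  -- decompose v = α•x + β•y + u with u in the joint complement
  set α : F := (y ⬝ᵥ (M₁ *ᵥ v)) * (x ⬝ᵥ (M₁ *ᵥ y))⁻¹ with hα
  set β : F := (x ⬝ᵥ (M₁ *ᵥ v)) * (x ⬝ᵥ (M₁ *ᵥ y))⁻¹ with hβ
  set u : Fin n → F := v - α • x - β • y with hu
  have hux : x ⬝ᵥ (M₁ *ᵥ u) = 0 := by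
    rw [hu, sub_sub, mulVec_sub, dotProduct_sub, mulVec_add, dotProduct_add,
      mulVec_smul, dotProduct_smul, mulVec_smul, dotProduct_smul, smul_eq_mul, smul_eq_mul,
      hx, hβ]
    field_simp
    ring
  have huy : y ⬝ᵥ (M₁ *ᵥ u) = 0 := by
    rw [hu, sub_sub, mulVec_sub, dotProduct_sub, mulVec_add, dotProduct_add,
      mulVec_smul, dotProduct_smul, mulVec_smul, dotProduct_smul, smul_eq_mul, smul_eq_mul,
      hy, bsymm M₁ hM₁s y x, hα]
    field_simp
    ring
  have hQu : u ⬝ᵥ (M₁ *ᵥ u) = 0 := hcon u hux huy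
  have hQw₀ : w₀ ⬝ᵥ (M₁ *ᵥ w₀) = 0 := hcon w₀ hw₀x hw₀y
  have hsum : (w₀ + u) ⬝ᵥ (M₁ *ᵥ (w₀ + u)) = 0 := by
    apply hcon
    · rw [mulVec_add, dotProduct_add, hw₀x, hux, add_zero]
    · rw [mulVec_add, dotProduct_add, hw₀y, huy, add_zero]
  have hcross : w₀ ⬝ᵥ (M₁ *ᵥ u) = 0 := by
    have := qexp2o M₁ hM₁s 1 w₀ u
    simp only [one_smul] at this
    rw [hsum, hQw₀, hQu] at this
    have h20 : (2:F) * (w₀ ⬝ᵥ (M₁ *ᵥ u)) = 0 := by linear_combination -this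
    exact (mul_eq_zero.mp h20).resolve_left h2
  have hveq : v = α • x + β • y + u := by rw [hu]; abel
  rw [hveq, mulVec_add, dotProduct_add, mulVec_add, dotProduct_add, mulVec_smul,
    dotProduct_smul, mulVec_smul, dotProduct_smul, smul_eq_mul, smul_eq_mul,
    bsymm M₁ hM₁s w₀ x, bsymm M₁ hM₁s w₀ y, hw₀x, hw₀y, hcross]
  ring

/-- Every nonzero isotropic vector has an isotropic "hyperbolic partner". -/
lemma partner (M₁ : Matrix (Fin n) (Fin n) F)
    (hM₁s : M₁ᵀ = M₁) (hM₁ : IsUnit M₁.det) (h2 : (2 : F) ≠ 0)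
    {x : Fin n → F} (hx0 : x ≠ 0) (hx : x ⬝ᵥ (M₁ *ᵥ x) = 0) :
    ∃ z, z ⬝ᵥ (M₁ *ᵥ z) = 0 ∧ x ⬝ᵥ (M₁ *ᵥ z) = 1 := by
  obtain ⟨u₀, hu₀⟩ := nondeg' M₁ hM₁ hx0
  set u' : Fin n → F := (x ⬝ᵥ (M₁ *ᵥ u₀))⁻¹ • u₀ with hu'
  have hbu' : x ⬝ᵥ (M₁ *ᵥ u') = 1 := by
    rw [hu', mulVec_smul, dotProduct_smul, smul_eq_mul]
    field_simp
  set b : F := -(u' ⬝ᵥ (M₁ *ᵥ u')) * 2⁻¹ with hb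
  refine ⟨u' + b • x, ?_, ?_⟩
  · rw [qexp2o M₁ hM₁s, hx, bsymm M₁ hM₁s u' x, hbu', hb]
    field_simp
    ring
  · rw [lin2or, hbu', hx, mul_zero, add_zero]

/-- Two non-orthogonal nonzero isotropic vectors have equal ratios. -/
lemma ratio_eq_of_nonorth (M₁ M₂ : Matrix (Fin n) (Fin n) F)
    (hM₁s : M₁ᵀ = M₁) (hM₁ : IsUnit M₁.det) (h2 : (2 : F) ≠ 0) (hn : 3 ≤ n)
    (hrat : ∀ z : Fin n → F, z ≠ 0 → z ⬝ᵥ (M₁ *ᵥ z) = 0 →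
      ∃ e, ∀ u, z ⬝ᵥ (M₂ *ᵥ u) = e * (z ⬝ᵥ (M₁ *ᵥ u)))
    {x y : Fin n → F} {c d : F}
    (hx : x ⬝ᵥ (M₁ *ᵥ x) = 0) (hy : y ⬝ᵥ (M₁ *ᵥ y) = 0) (hxy : x ⬝ᵥ (M₁ *ᵥ y) ≠ 0)
    (hc : ∀ u, x ⬝ᵥ (M₂ *ᵥ u) = c * (x ⬝ᵥ (M₁ *ᵥ u)))
    (hd : ∀ u, y ⬝ᵥ (M₂ *ᵥ u) = d * (y ⬝ᵥ (M₁ *ᵥ u))) : c = d := by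
  obtain ⟨w, hwx, hwy, hQw⟩ := wexists M₁ hM₁s hM₁ h2 hn hx hy hxy
  set t : F := -(w ⬝ᵥ (M₁ *ᵥ w)) * (2 * (x ⬝ᵥ (M₁ *ᵥ y)))⁻¹ with htdef
  have ht0 : t ≠ 0 :=
    mul_ne_zero (neg_ne_zero.mpr hQw) (inv_ne_zero (mul_ne_zero h2 hxy))
  have hisoP : (x + t • y + (1:F) • w) ⬝ᵥ (M₁ *ᵥ (x + t • y + (1:F) • w)) = 0 := by
    rw [qexp3o M₁ hM₁s, hx, hy, hwx, hwy, htdef]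
    field_simp
    ring
  have hisoM : (x + t • y + (-1:F) • w) ⬝ᵥ (M₁ *ᵥ (x + t • y + (-1:F) • w)) = 0 := by
    rw [qexp3o M₁ hM₁s, hx, hy, hwx, hwy, htdef]
    field_simp
    ring
  have hbP : x ⬝ᵥ (M₁ *ᵥ (x + t • y + (1:F) • w)) = t * (x ⬝ᵥ (M₁ *ᵥ y)) := by
    rw [lin3or, hx, hwx]; ring
  have hbM : x ⬝ᵥ (M₁ *ᵥ (x + t • y + (-1:F) • w)) = t * (x ⬝ᵥ (M₁ *ᵥ y)) := by
    rw [lin3or, hx, hwx]; ring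
  have hzP0 : x + t • y + (1:F) • w ≠ 0 := by
    intro h
    rw [h] at hbP
    simp only [mulVec_zero, dotProduct_zero] at hbP
    exact mul_ne_zero ht0 hxy hbP.symm
  have hzM0 : x + t • y + (-1:F) • w ≠ 0 := by
    intro h
    rw [h] at hbM
    simp only [mulVec_zero, dotProduct_zero] at hbM
    exact mul_ne_zero ht0 hxy hbM.symm
  obtain ⟨eP, heP⟩ := hrat _ hzP0 hisoP
  obtain ⟨eM, heM⟩ := hrat _ hzM0 hisoM
  set a : F := 2 * c - (eP + eM) with ha
  set b : F := t * (2 * d - (eP + eM)) with hb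
  set g : F := -(eP - eM) with hg
  have hv0 : ∀ u, (a • x + b • y + g • w) ⬝ᵥ (M₁ *ᵥ u) = 0 := by
    intro u
    rw [lin3]
    have hp1 := heP u
    have hm1 := heM u
    rw [lin3o M₂, lin3o M₁] at hp1 hm1
    rw [ha, hb, hg]
    linear_combination hp1 + hm1 - 2 * (hc u) - 2 * t * (hd u)
  have hv : a • x + b • y + g • w = 0 := nondeg M₁ hM₁ _ hv0
  have hpx : x ⬝ᵥ (M₁ *ᵥ (a • x + b • y + g • w)) = 0 := by
    rw [hv]; simp
  have hpy : y ⬝ᵥ (M₁ *ᵥ (a • x + b • y + g • w)) = 0 := by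
    rw [hv]; simp
  rw [lin3r, hx, hwx] at hpx
  rw [lin3r, hy, bsymm M₁ hM₁s y x, hwy] at hpy
  have hb0 : b = 0 := by
    have : b * (x ⬝ᵥ (M₁ *ᵥ y)) = 0 := by linear_combination hpx
    exact (mul_eq_zero.mp this).resolve_right hxy
  have ha0 : a = 0 := by
    have : a * (x ⬝ᵥ (M₁ *ᵥ y)) = 0 := by linear_combination hpy
    exact (mul_eq_zero.mp this).resolve_right hxy
  have hd2 : 2 * d - (eP + eM) = 0 := by
    rcases mul_eq_zero.mp (hb ▸ hb0) with h | h
    · exact absurd h ht0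
    · exact h
  apply mul_left_cancel₀ h2
  have := ha ▸ ha0
  linear_combination this - hd2

/-- Any two nonzero isotropic vectors have equal ratios. -/
lemma ratio_eq (M₁ M₂ : Matrix (Fin n) (Fin n) F)
    (hM₁s : M₁ᵀ = M₁) (hM₁ : IsUnit M₁.det) (h2 : (2 : F) ≠ 0) (hn : 3 ≤ n)
    (hrat : ∀ z : Fin n → F, z ≠ 0 → z ⬝ᵥ (M₁ *ᵥ z) = 0 →
      ∃ e, ∀ u, z ⬝ᵥ (M₂ *ᵥ u) = e * (z ⬝ᵥ (M₁ *ᵥ u)))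
    {x y : Fin n → F} {c d : F}
    (hx0 : x ≠ 0) (hx : x ⬝ᵥ (M₁ *ᵥ x) = 0) (hy0 : y ≠ 0) (hy : y ⬝ᵥ (M₁ *ᵥ y) = 0)
    (hc : ∀ u, x ⬝ᵥ (M₂ *ᵥ u) = c * (x ⬝ᵥ (M₁ *ᵥ u)))
    (hd : ∀ u, y ⬝ᵥ (M₂ *ᵥ u) = d * (y ⬝ᵥ (M₁ *ᵥ u))) : c = d := by
  by_cases hxy : x ⬝ᵥ (M₁ *ᵥ y) = 0
  swap
  · exact ratio_eq_of_nonorth M₁ M₂ hM₁s hM₁ h2 hn hrat hx hy hxy hc hd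
  obtain ⟨z₀, hz₀iso, hxz₀⟩ := partner M₁ hM₁s hM₁ h2 hx0 hx
  have hz₀0 : z₀ ≠ 0 := by
    intro h
    rw [h] at hxz₀
    simp at hxz₀
  obtain ⟨e₀, he₀⟩ := hrat z₀ hz₀0 hz₀iso
  have hce₀ : c = e₀ :=
    ratio_eq_of_nonorth M₁ M₂ hM₁s hM₁ h2 hn hrat hx hz₀iso
      (by rw [hxz₀]; exact one_ne_zero) hc he₀
  by_cases hyz : y ⬝ᵥ (M₁ *ᵥ z₀) = 0
  swap
  · have hde₀ : d = e₀ :=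
      ratio_eq_of_nonorth M₁ M₂ hM₁s hM₁ h2 hn hrat hy hz₀iso hyz hd he₀
    rw [hce₀, hde₀]
  obtain ⟨z₁, hz₁iso, hyz₁⟩ := partner M₁ hM₁s hM₁ h2 hy0 hy
  set β : F := z₀ ⬝ᵥ (M₁ *ᵥ z₁) with hβ
  obtain ⟨t, ht0, htx⟩ : ∃ t : F, t ≠ 0 ∧ 1 + t * (x ⬝ᵥ (M₁ *ᵥ z₁)) ≠ 0 := by
    by_cases hT : 1 + x ⬝ᵥ (M₁ *ᵥ z₁) = 0
    · refine ⟨-1, neg_ne_zero.mpr one_ne_zero, fun h => h2 ?_⟩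
      linear_combination h + hT
    · exact ⟨1, one_ne_zero, by simpa using hT⟩
  have hziso : (z₀ + t • z₁ + (-β) • y) ⬝ᵥ (M₁ *ᵥ (z₀ + t • z₁ + (-β) • y)) = 0 := by
    rw [qexp3o M₁ hM₁s, hz₀iso, hz₁iso, hy, ← hβ, bsymm M₁ hM₁s z₀ y, hyz,
      bsymm M₁ hM₁s z₁ y, hyz₁]
    ring
  have hBxz : x ⬝ᵥ (M₁ *ᵥ (z₀ + t • z₁ + (-β) • y)) = 1 + t * (x ⬝ᵥ (M₁ *ᵥ z₁)) := by
    rw [lin3or, hxz₀, bsymm M₁ hM₁s x y, bsymm M₁ hM₁s y x, hxy]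
    ring
  have hByz : y ⬝ᵥ (M₁ *ᵥ (z₀ + t • z₁ + (-β) • y)) = t := by
    rw [lin3or, hyz, hyz₁, hy]
    ring
  have hz0 : z₀ + t • z₁ + (-β) • y ≠ 0 := by
    intro h
    rw [h] at hByz
    simp only [mulVec_zero, dotProduct_zero] at hByz
    exact ht0 hByz.symm
  obtain ⟨e, he⟩ := hrat _ hz0 hziso
  have hce : c = e :=
    ratio_eq_of_nonorth M₁ M₂ hM₁s hM₁ h2 hn hrat hx hziso (by rw [hBxz]; exact htx) hc he
  have hde : d = e :=
    ratio_eq_of_nonorth M₁ M₂ hM₁s hM₁ h2 hn hrat hy hziso (by rw [hByz]; exact ht0) hd he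
  rw [hce, hde]

lemma two_ne_zero_of_odd_card [Fintype F] (hq : Odd (Fintype.card F)) : (2 : F) ≠ 0 := by
  intro h
  have hchar : CharP F (ringChar F) := ringChar.charP F
  have hp : (ringChar F).Prime := CharP.char_is_prime F (ringChar F)
  have hdvd : ringChar F ∣ 2 := by
    have : ((2 : ℕ) : F) = 0 := by exact_mod_cast h
    exact (CharP.cast_eq_zero_iff F (ringChar F) 2).mp this
  have hp2 : ringChar F = 2 := (Nat.prime_dvd_prime_iff_eq hp Nat.prime_two).mp hdvd
  obtain ⟨k, hpk, hcard⟩ := FiniteField.card F (ringChar F)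
  rw [hp2] at hcard
  have : Even (Fintype.card F) := by
    rw [hcard]
    exact (Nat.even_pow.mpr ⟨even_iff_two_dvd.mpr dvd_rfl, k.pos.ne'⟩)
  exact (Nat.not_even_iff_odd.mpr hq) this


lemma exists_isotropic [Fintype F] (hn : 3 ≤ n) (M : Matrix (Fin n) (Fin n) F) :
    ∃ x : Fin n → F, x ≠ 0 ∧ x ⬝ᵥ (M *ᵥ x) = 0 := by
  classical
  have : Nontrivial F := inferInstance
  set f : MvPolynomial (Fin n) F := ∑ i, ∑ j, C (M i j) * X i * X j with hf
  have h1 : ∀ x, eval x f = x ⬝ᵥ (M *ᵥ x) := by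
    intro x
    rw [hf]
    simp only [map_sum, _root_.map_mul, eval_C, eval_X, dotProduct, mulVec, Finset.mul_sum]
    exact Finset.sum_congr rfl fun i _ => Finset.sum_congr rfl fun j _ => by ring
  have h2 : f.totalDegree < Fintype.card (Fin n) := by
    have : f.totalDegree ≤ 2 := by
      refine (totalDegree_finset_sum _ _).trans ?_
      refine Finset.sup_le fun i _ => ?_
      refine (totalDegree_finset_sum _ _).trans ?_
      refine Finset.sup_le fun j _ => ?_
      refine (totalDegree_mul _ _).trans ?_
      refine le_trans (add_le_add ((totalDegree_mul _ _).trans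
        (add_le_add (le_of_eq (totalDegree_C _)) (le_of_eq (totalDegree_X _)))) (le_of_eq (totalDegree_X _))) ?_
      norm_num
    simpa using lt_of_le_of_lt (this.trans (by omega : (2:ℕ) ≤ n - 1)) (by omega : n - 1 < n)
  set p := ringChar F with hp
  have hchar : CharP F p := ringChar.charP F
  have hpp : p.Prime := CharP.char_is_prime F p
  have hdvd : p ∣ Fintype.card { x : Fin n → F // eval x f = 0 } :=
    char_dvd_card_solutions p h2
  by_contra hcon
  push_neg at hcon
  have hsub : ∀ x : { x : Fin n → F // eval x f = 0 }, x = ⟨0, by rw [h1]; simp⟩ := by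
    rintro ⟨x, hx⟩
    have : x = 0 := by
      by_contra hxne
      exact (hcon x hxne) (by rw [← h1]; exact hx)
    simp [this]
  have hcard : Fintype.card { x : Fin n → F // eval x f = 0 } = 1 := by
    refine Fintype.card_eq_one_iff.2 ⟨⟨0, by rw [h1]; simp⟩, fun y => hsub y⟩
  rw [hcard] at hdvd
  exact hpp.one_lt.ne' (Nat.dvd_one.mp hdvd)

end QFAux

theorem quadratic_forms_same_zero_set_proportional {F : Type*} [Field F] [Fintype F] {n : ℕ}
    (hq : Odd (Fintype.card F)) (hn : 3 ≤ n)
    (M₁ M₂ : Matrix (Fin n) (Fin n) F)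
    (hM₁s : M₁ᵀ = M₁) (hM₂s : M₂ᵀ = M₂)
    (hM₁ : IsUnit M₁.det) (hM₂ : IsUnit M₂.det)
    (hzero : {x : Fin n → F | x ⬝ᵥ (M₁ *ᵥ x) = 0} = {x : Fin n → F | x ⬝ᵥ (M₂ *ᵥ x) = 0}) :
    ∃ lam : F, lam ≠ 0 ∧ M₂ = lam • M₁ := by
  have h2 : (2 : F) ≠ 0 := two_ne_zero_of_odd_card hq
  have hz : ∀ v : Fin n → F, v ⬝ᵥ (M₁ *ᵥ v) = 0 ↔ v ⬝ᵥ (M₂ *ᵥ v) = 0 := by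
    intro v
    have := Set.ext_iff.mp hzero v
    simpa using this
  have hrat : ∀ z : Fin n → F, z ≠ 0 → z ⬝ᵥ (M₁ *ᵥ z) = 0 →
      ∃ e, ∀ u, z ⬝ᵥ (M₂ *ᵥ u) = e * (z ⬝ᵥ (M₁ *ᵥ u)) := fun z h0 hiso =>
    (ratio_exists M₁ M₂ hM₁s hM₂s hM₁ hM₂ h2 hz h0 hiso).imp fun e h => h.2
  obtain ⟨x₀, hx₀0, hx₀⟩ := exists_isotropic hn M₁
  obtain ⟨c₀, hc₀0, hc₀⟩ := ratio_exists M₁ M₂ hM₁s hM₂s hM₁ hM₂ h2 hz hx₀0 hx₀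
  obtain ⟨z₀, hz₀iso, hxz₀⟩ := partner M₁ hM₁s hM₁ h2 hx₀0 hx₀
  have hz₀0 : z₀ ≠ 0 := by
    intro h; rw [h] at hxz₀; simp at hxz₀
  obtain ⟨e₀, he₀'⟩ := hrat z₀ hz₀0 hz₀iso
  have he₀eq : e₀ = c₀ :=
    ratio_eq M₁ M₂ hM₁s hM₁ h2 hn hrat hz₀0 hz₀iso hx₀0 hx₀ he₀' hc₀
  have he₀ : ∀ u, z₀ ⬝ᵥ (M₂ *ᵥ u) = c₀ * (z₀ ⬝ᵥ (M₁ *ᵥ u)) :=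
    fun u => he₀eq ▸ he₀' u
  have main : ∀ v u, v ⬝ᵥ (M₂ *ᵥ u) = c₀ * (v ⬝ᵥ (M₁ *ᵥ u)) := by
    intro v u
    set α : F := z₀ ⬝ᵥ (M₁ *ᵥ v) with hα
    set β : F := x₀ ⬝ᵥ (M₁ *ᵥ v) with hβ
    set w : Fin n → F := v - α • x₀ - β • z₀ with hw
    have hwx : x₀ ⬝ᵥ (M₁ *ᵥ w) = 0 := by
      rw [hw, sub_sub, mulVec_sub, dotProduct_sub, mulVec_add, dotProduct_add,
        mulVec_smul, dotProduct_smul, mulVec_smul, dotProduct_smul, smul_eq_mul, smul_eq_mul,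
        hx₀, hxz₀, hβ]
      ring
    have hwz : z₀ ⬝ᵥ (M₁ *ᵥ w) = 0 := by
      rw [hw, sub_sub, mulVec_sub, dotProduct_sub, mulVec_add, dotProduct_add,
        mulVec_smul, dotProduct_smul, mulVec_smul, dotProduct_smul, smul_eq_mul, smul_eq_mul,
        hz₀iso, bsymm M₁ hM₁s z₀ x₀, hxz₀, hα]
      ring
    set γ : F := -(w ⬝ᵥ (M₁ *ᵥ w)) * 2⁻¹ with hγ
    have hsiso : (x₀ + (1:F) • w + γ • z₀) ⬝ᵥ (M₁ *ᵥ (x₀ + (1:F) • w + γ • z₀)) = 0 := by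
      rw [qexp3o M₁ hM₁s, hx₀, hz₀iso, hwx, hxz₀, bsymm M₁ hM₁s w z₀, hwz, hγ]
      field_simp
      ring
    have hBzs : z₀ ⬝ᵥ (M₁ *ᵥ (x₀ + (1:F) • w + γ • z₀)) = 1 := by
      rw [lin3or, bsymm M₁ hM₁s z₀ x₀, hxz₀, hwz, hz₀iso]
      ring
    have hs0 : x₀ + (1:F) • w + γ • z₀ ≠ 0 := by
      intro h
      rw [h] at hBzs
      simp at hBzs
    obtain ⟨es, hes'⟩ := hrat _ hs0 hsiso
    have hesq : es = c₀ :=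
      ratio_eq M₁ M₂ hM₁s hM₁ h2 hn hrat hs0 hsiso hx₀0 hx₀ hes' hc₀
    have hwu : w ⬝ᵥ (M₂ *ᵥ u) = c₀ * (w ⬝ᵥ (M₁ *ᵥ u)) := by
      have hsu := hes' u
      rw [lin3o M₂, lin3o M₁, hesq] at hsu
      linear_combination hsu - (hc₀ u) - γ * (he₀ u)
    have hveq : v = α • x₀ + β • z₀ + (1:F) • w := by
      rw [hw]
      simp only [one_smul]
      abel
    rw [hveq, lin3 M₂ α β 1, lin3 M₁ α β 1, hc₀ u, he₀ u, hwu]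
    ring
  refine ⟨c₀, hc₀0, ?_⟩
  ext i j
  have := main (Pi.single i 1) (Pi.single j 1)
  simp only [single_dotProduct, mulVec_single, one_mul, mul_one] at this
  simpa using this
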